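/- Let f be a Schwartz function on ℝ with support contained in [0, ∞), and define f^+(θ) = i e^θ ∫_ℝ f(u) e^{iu e^θ} du for θ ∈ ℝ. Then f^+ extends to a bounded analytic function on the strip 0 < Im θ < π, continuous up to the boundary, with boundary value f^+(θ + iπ) = -i e^θ ∫_ℝ f(u) e^{-iu e^θ} du = f^-(θ) for real θ. -/

import Mathlib

open MeasureTheory Complex Filter Set

private lemma norm_exp_factor {w : ℂ} (hw : 0 ≤ w.im) {u : ℝ} (hu : 0 ≤ u) :
    ‖Complex.exp (Complex.I * u * w)‖ ≤ 1 := by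
  have h1 : ‖Complex.exp (Complex.I * u * w)‖ = Real.exp (-(u * w.im)) := by
    rw [Complex.norm_exp]
    congr 1
    simp [Complex.mul_re, Complex.mul_im]
  rw [h1]
  exact Real.exp_le_one_iff.mpr (by nlinarith)

private lemma norm_mul_exp_le {g : ℝ → ℂ} (hg0 : ∀ u : ℝ, u < 0 → g u = 0) {w : ℂ}
    (hw : 0 ≤ w.im) (u : ℝ) :
    ‖g u * Complex.exp (Complex.I * u * w)‖ ≤ ‖g u‖ := by
  rcases lt_or_ge u 0 with hu | hu
  · simp [hg0 u hu]
  · rw [norm_mul]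
    nth_rewrite 2 [← mul_one ‖g u‖]
    gcongr
    exact norm_exp_factor hw hu

private lemma integrable_mul_exp {g : ℝ → ℂ} (hgi : Integrable g) (hgc : Continuous g)
    (hg0 : ∀ u : ℝ, u < 0 → g u = 0) {w : ℂ} (hw : 0 ≤ w.im) :
    Integrable (fun u : ℝ => g u * Complex.exp (Complex.I * u * w)) := by
  refine hgi.norm.mono' ?_ (Filter.Eventually.of_forall (norm_mul_exp_le hg0 hw))
  exact (hgc.mul (by fun_prop)).aestronglyMeasurable

private lemma hasDerivAt_exp_factor (w : ℂ) (u : ℝ) :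
    HasDerivAt (fun u : ℝ => Complex.exp (Complex.I * u * w))
      (Complex.I * w * Complex.exp (Complex.I * u * w)) u := by
  have h1 : HasDerivAt (fun z : ℂ => Complex.exp (Complex.I * z * w))
      (Complex.I * w * Complex.exp (Complex.I * u * w)) (u : ℂ) := by
    have h2 : HasDerivAt (fun z : ℂ => Complex.I * z * w) (Complex.I * w) (u : ℂ) := by
      simpa using (((hasDerivAt_id ((u : ℂ))).const_mul Complex.I).mul_const w)
    simpa [mul_comm] using h2.cexp
  exact h1.comp_ofReal

private lemma deriv_supp (f : SchwartzMap ℝ ℂ) (hsupp : ∀ u : ℝ, u < 0 → f u = 0) :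
    ∀ u : ℝ, u < 0 → SchwartzMap.derivCLM ℝ ℂ f u = 0 := by
  intro u hu
  rw [SchwartzMap.derivCLM_apply]
  have h : (⇑f : ℝ → ℂ) =ᶠ[nhds u] fun _ => 0 :=
    Filter.eventually_of_mem (Iio_mem_nhds hu) (fun x hx => hsupp x hx)
  rw [h.deriv_eq]
  simp

private lemma f_zero (f : SchwartzMap ℝ ℂ) (hsupp : ∀ u : ℝ, u < 0 → f u = 0) : f 0 = 0 := by
  have h : Set.EqOn (⇑f) (fun _ => (0:ℂ)) (Set.Iio 0) := fun x hx => hsupp x hx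
  have := h.closure f.continuous continuous_const
  rw [closure_Iio] at this
  exact this (le_refl (0:ℝ))

private lemma key_ibp (f : SchwartzMap ℝ ℂ) (hsupp : ∀ u : ℝ, u < 0 → f u = 0) {w : ℂ}
    (hw : 0 ≤ w.im) :
    Complex.I * w * (∫ u : ℝ, f u * Complex.exp (Complex.I * u * w)) =
      - ∫ u : ℝ, (SchwartzMap.derivCLM ℝ ℂ f) u * Complex.exp (Complex.I * u * w) := by
  set g := SchwartzMap.derivCLM ℝ ℂ f with hg
  have hg0 : ∀ u : ℝ, u < 0 → g u = 0 := deriv_supp f hsupp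
  set E : ℝ → ℂ := fun u => Complex.exp (Complex.I * u * w) with hE
  set H : ℝ → ℂ := fun u => f u * E u with hH
  set H' : ℝ → ℂ := fun u => g u * E u + f u * (Complex.I * w * E u) with hH'
  have hderiv : ∀ u : ℝ, HasDerivAt H (H' u) u := by
    intro u
    have hdf : HasDerivAt f (g u) u := by
      have := (f.differentiableAt (x := u)).hasDerivAt
      simpa [hg, SchwartzMap.derivCLM_apply] using this
    exact hdf.mul (hasDerivAt_exp_factor w u)
  have hint1 : Integrable (fun u : ℝ => g u * E u) :=
    integrable_mul_exp g.integrable g.continuous hg0 hw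
  have hintf : Integrable (fun u : ℝ => f u * E u) :=
    integrable_mul_exp f.integrable f.continuous hsupp hw
  have hint2 : Integrable (fun u : ℝ => f u * (Complex.I * w * E u)) := by
    have : (fun u : ℝ => f u * (Complex.I * w * E u)) =
        fun u => (Complex.I * w) * (f u * E u) := by funext u; ring
    rw [this]
    exact hintf.const_mul _
  have hintH' : Integrable H' := hint1.add hint2
  have htop : Tendsto H atTop (nhds 0) := by
    apply squeeze_zero_norm (fun u => norm_mul_exp_le hsupp hw u)
    have h0 : Tendsto f (cocompact ℝ) (nhds 0) := zero_at_infty f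
    have h1 : Tendsto f atTop (nhds 0) := by
      refine h0.mono_left ?_
      rw [cocompact_eq_atBot_atTop]
      exact le_sup_right
    simpa using h1.norm
  have hbot : Tendsto H atBot (nhds 0) := by
    refine Filter.Tendsto.congr' ?_ tendsto_const_nhds
    filter_upwards [Iio_mem_atBot 0] with u hu
    simp [hH, hsupp u hu]
  have hH0 : H 0 = 0 := by simp [hH, f_zero f hsupp]
  have hIic : ∫ u in Set.Iic (0:ℝ), H' u = H 0 - 0 :=
    MeasureTheory.integral_Iic_of_hasDerivAt_of_tendsto' (fun x _ => hderiv x)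
      hintH'.integrableOn hbot
  have hIoi : ∫ u in Set.Ioi (0:ℝ), H' u = 0 - H 0 :=
    MeasureTheory.integral_Ioi_of_hasDerivAt_of_tendsto' (fun x _ => hderiv x)
      hintH'.integrableOn htop
  have htotal : ∫ u : ℝ, H' u = 0 := by
    rw [← intervalIntegral.integral_Iic_add_Ioi hintH'.integrableOn hintH'.integrableOn,
      hIic, hIoi]
    ring
  rw [MeasureTheory.integral_add hint1 hint2] at htotal
  have h2 : ∫ u : ℝ, f u * (Complex.I * w * E u) =
      Complex.I * w * ∫ u : ℝ, f u * E u := by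
    rw [← MeasureTheory.integral_const_mul]
    congr 1; funext u; ring
  rw [h2] at htotal
  linear_combination htotal

private lemma exp_im_nonneg {z : ℂ} (h1 : 0 ≤ z.im) (h2 : z.im ≤ Real.pi) :
    0 ≤ (Complex.exp z).im := by
  rw [Complex.exp_im]
  exact mul_nonneg (Real.exp_pos _).le (Real.sin_nonneg_of_nonneg_of_le_pi h1 h2)

/-- Let `f` be a Schwartz function on `ℝ` supported in `[0, ∞)`, and let
`f⁺(z) = i e^z ∫ f(u) e^{iu e^z} du`.  Then `f⁺` is analytic on the open strip
`0 < Im z < π`, continuous and bounded on the closed strip `0 ≤ Im z ≤ π`, and its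
boundary value at `Im z = π` is `f⁺(θ + iπ) = -i e^θ ∫ f(u) e^{-iu e^θ} du = f⁻(θ)`. -/
theorem stmt_18 (f : SchwartzMap ℝ ℂ) (hsupp : ∀ u : ℝ, u < 0 → f u = 0)
    (Fp : ℂ → ℂ)
    (hFp : ∀ z : ℂ, Fp z = Complex.I * Complex.exp z *
      ∫ u : ℝ, f u * Complex.exp (Complex.I * u * Complex.exp z)) :
    DifferentiableOn ℂ Fp {z : ℂ | 0 < z.im ∧ z.im < Real.pi} ∧
    ContinuousOn Fp {z : ℂ | 0 ≤ z.im ∧ z.im ≤ Real.pi} ∧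
    (∃ C : ℝ, ∀ z ∈ {z : ℂ | 0 ≤ z.im ∧ z.im ≤ Real.pi}, ‖Fp z‖ ≤ C) ∧
    (∀ θ : ℝ, Fp (θ + Real.pi * Complex.I) =
      -Complex.I * Complex.exp θ *
        ∫ u : ℝ, f u * Complex.exp (-Complex.I * u * Complex.exp θ)) := by
  have hFpfun : Fp = fun z => Complex.I * Complex.exp z *
      ∫ u : ℝ, f u * Complex.exp (Complex.I * u * Complex.exp z) := funext hFp
  set G : ℂ → ℂ := fun z => ∫ u : ℝ, f u * Complex.exp (Complex.I * u * Complex.exp z)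
    with hG
  refine ⟨?_, ?_, ?_, ?_⟩
  · -- differentiability
    intro z₀ hz₀
    obtain ⟨h1, h2⟩ := hz₀
    have hGdiff : DifferentiableAt ℂ G z₀ := by
      set ε : ℝ := min z₀.im (Real.pi - z₀.im) with hε
      have εpos : 0 < ε := lt_min h1 (by linarith)
      have hball : ∀ x ∈ Metric.ball z₀ ε,
          0 ≤ x.im ∧ x.im ≤ Real.pi ∧ x.re ≤ z₀.re + ε := by
        intro x hx
        rw [Metric.mem_ball, Complex.dist_eq] at hx
        have hre : |(x - z₀).re| ≤ ‖x - z₀‖ := Complex.abs_re_le_norm _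
        have him : |(x - z₀).im| ≤ ‖x - z₀‖ := Complex.abs_im_le_norm _
        rw [Complex.sub_re] at hre
        rw [Complex.sub_im] at him
        rw [abs_le] at hre him
        have hε1 : ε ≤ z₀.im := min_le_left _ _
        have hε2 : ε ≤ Real.pi - z₀.im := min_le_right _ _
        refine ⟨by linarith [him.1, hx], by linarith [him.2, hx], by linarith [hre.2, hx]⟩
      have key := hasDerivAt_integral_of_dominated_loc_of_deriv_le
        (F := fun (z : ℂ) (u : ℝ) => f u * Complex.exp (Complex.I * u * Complex.exp z))
        (F' := fun (z : ℂ) (u : ℝ) => f u *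
          (Complex.exp (Complex.I * u * Complex.exp z) * (Complex.I * u * Complex.exp z)))
        (x₀ := z₀) (bound := fun u => Real.exp (z₀.re + ε) * (‖u‖ ^ 1 * ‖f u‖))
        (μ := volume) (Metric.ball_mem_nhds z₀ εpos)
        (Filter.Eventually.of_forall fun x =>
          ((f.continuous.mul (by fun_prop)).aestronglyMeasurable))
        (integrable_mul_exp f.integrable f.continuous hsupp (exp_im_nonneg h1.le h2.le))
        ((f.continuous.mul (by fun_prop)).aestronglyMeasurable)
        ?_
        (((f.integrable_pow_mul volume 1)).const_mul _)
        ?_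
      · exact key.2.differentiableAt
      · refine Filter.Eventually.of_forall fun u => fun x hx => ?_
        obtain ⟨hx1, hx2, hx3⟩ := hball x hx
        rcases lt_or_ge u 0 with hu | hu
        · simp only [hsupp u hu, zero_mul, norm_zero]
          positivity
        · rw [norm_mul, norm_mul]
          have hb1 : ‖Complex.exp (Complex.I * u * Complex.exp x)‖ ≤ 1 :=
            norm_exp_factor (exp_im_nonneg hx1 hx2) hu
          have hb2 : ‖Complex.I * u * Complex.exp x‖ ≤ |u| * Real.exp (z₀.re + ε) := by
            rw [norm_mul, norm_mul]
            simp only [Complex.norm_I, one_mul, Complex.norm_real, Real.norm_eq_abs,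
              Complex.norm_exp]
            gcongr
          calc ‖(f u : ℂ)‖ * (‖Complex.exp (Complex.I * u * Complex.exp x)‖ *
                ‖Complex.I * u * Complex.exp x‖)
              ≤ ‖f u‖ * (1 * (|u| * Real.exp (z₀.re + ε))) := by gcongr
            _ = Real.exp (z₀.re + ε) * (‖u‖ ^ 1 * ‖f u‖) := by
                rw [Real.norm_eq_abs]; ring
      · refine Filter.Eventually.of_forall fun u => fun x hx => ?_
        have he : HasDerivAt (fun z : ℂ => Complex.I * u * Complex.exp z)
            (Complex.I * u * Complex.exp x) x :=
          (Complex.hasDerivAt_exp x).const_mul (Complex.I * u)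
        exact he.cexp.const_mul (f u)
    rw [hFpfun]
    exact (((Complex.differentiable_exp z₀).const_mul
      Complex.I).mul hGdiff).differentiableWithinAt
  · -- continuity
    rw [hFpfun]
    have hGcont : ContinuousOn G {z : ℂ | 0 ≤ z.im ∧ z.im ≤ Real.pi} := by
      rw [continuousOn_iff_continuous_restrict]
      refine MeasureTheory.continuous_of_dominated
        (F := fun (z : {z : ℂ | 0 ≤ z.im ∧ z.im ≤ Real.pi}) (u : ℝ) =>
          f u * Complex.exp (Complex.I * u * Complex.exp z.1))
        (bound := fun u => ‖f u‖)
        (fun z => (f.continuous.mul (by fun_prop)).aestronglyMeasurable)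
        (fun z => Filter.Eventually.of_forall
          (norm_mul_exp_le hsupp (exp_im_nonneg z.2.1 z.2.2)))
        f.integrable.norm
        (Filter.Eventually.of_forall fun u => by fun_prop)
    exact ((continuous_const.mul Complex.continuous_exp).continuousOn).mul hGcont
  · -- boundedness
    refine ⟨∫ u : ℝ, ‖SchwartzMap.derivCLM ℝ ℂ f u‖, fun z hz => ?_⟩
    obtain ⟨h1, h2⟩ := hz
    have hw : 0 ≤ (Complex.exp z).im := exp_im_nonneg h1 h2
    rw [hFp z, key_ibp f hsupp hw, norm_neg]
    refine MeasureTheory.norm_integral_le_of_norm_le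
      (SchwartzMap.derivCLM ℝ ℂ f).integrable.norm ?_
    exact Filter.Eventually.of_forall (norm_mul_exp_le (deriv_supp f hsupp) hw)
  · -- boundary value
    intro θ
    rw [hFp]
    have he : Complex.exp ((θ : ℂ) + Real.pi * Complex.I) = -Complex.exp θ := by
      rw [Complex.exp_add, Complex.exp_pi_mul_I]
      ring
    rw [he]
    have h1 : Complex.I * -Complex.exp θ = -Complex.I * Complex.exp θ := by ring
    rw [h1]
    congr 1
    refine MeasureTheory.integral_congr_ae (Filter.Eventually.of_forall fun u => ?_)
    ring_nf
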